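/- Let T be maximally monotone and h : X × X* → ℝ ∪ {+∞} a proper convex lsc function with h ≥ ⟨·,·⟩ and h(x,x*) = ⟨x,x*⟩ whenever x* ∈ T(x). Then the operator T_h defined by T_h(x) := {x* : (x*,x) ∈ ∂h(x,x*)} equals T. -/

import Mathlib

open NormedSpace

noncomputable section

/-- Convexity for extended-real-valued functions. -/
def EConvexOn {E : Type*} [AddCommMonoid E] [Module ℝ E] (f : E → EReal) : Prop :=
  ∀ x y : E, ∀ a b : ℝ, 0 ≤ a → 0 ≤ b → a + b = 1 →
    f (a • x + b • y) ≤ (a : EReal) * f x + (b : EReal) * f y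

/-- Properness: somewhere finite and never `⊥` (i.e. values in `ℝ ∪ {+∞}`). -/
def EProper {E : Type*} (f : E → EReal) : Prop :=
  (∃ x, f x ≠ ⊤) ∧ ∀ x, f x ≠ ⊥

variable {X : Type*} [NormedAddCommGroup X] [NormedSpace ℝ X]

/-- The ε-subdifferential of `f : X → ℝ ∪ {+∞}` at `x`. -/
def epsSubdiff (f : X → EReal) (ε : ℝ) (x : X) : Set (StrongDual ℝ X) :=
  {p | f x ≠ ⊤ ∧ ∀ y : X, f x + ((p (y - x) : ℝ) : EReal) ≤ f y + (ε : EReal)}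

/-- The Fenchel conjugate of `f : X → ℝ ∪ {+∞}`. -/
def fconj (f : X → EReal) (p : StrongDual ℝ X) : EReal :=
  ⨆ y : X, ((p y : ℝ) : EReal) - f y

/-- The duality pairing `⟨x, x*⟩` on `X × X*`. -/
def pairing (z : X × StrongDual ℝ X) : ℝ := z.2 z.1

/-- `h* ∘ i`, the conjugate of `h : X × X* → ℝ ∪ {+∞}` with respect to the pairing
`⟨(x,x*),(y*,y)⟩ = ⟨x,y*⟩ + ⟨y,x*⟩`, composed with the swap `i(x,x*) = (x*,x)`. -/
def conjI (h : X × StrongDual ℝ X → EReal) (z : X × StrongDual ℝ X) : EReal :=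
  ⨆ w : X × StrongDual ℝ X, ((z.2 w.1 + w.2 z.1 : ℝ) : EReal) - h w

/-- The averaging map `A h := (1/2)(h + h* ∘ i)`. -/
def Amap (h : X × StrongDual ℝ X → EReal) : X × StrongDual ℝ X → EReal :=
  fun z => (((1 : ℝ)/2 : ℝ) : EReal) * (h z + conjI h z)

/-- Monotone multivalued operator `T : X ⇉ X*`. -/
def IsMonotoneOp (T : X → Set (StrongDual ℝ X)) : Prop :=
  ∀ ⦃x p y q⦄, p ∈ T x → q ∈ T y → 0 ≤ (p - q) (x - y)

/-- Maximally monotone operator. -/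
def IsMaxMonotoneOp (T : X → Set (StrongDual ℝ X)) : Prop :=
  IsMonotoneOp T ∧ ∀ x p, (∀ y q, q ∈ T y → 0 ≤ (p - q) (x - y)) → p ∈ T x

/-- The Fitzpatrick family `H(T)`: lsc convex `h ≥ ⟨·,·⟩` with equality on `gph T`. -/
def InFitzFamily (T : X → Set (StrongDual ℝ X)) (h : X × StrongDual ℝ X → EReal) : Prop :=
  LowerSemicontinuous h ∧ EConvexOn h ∧ (∀ z, (pairing z : EReal) ≤ h z) ∧
    ∀ x p, p ∈ T x → h (x, p) = (pairing (x, p) : EReal)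

/-- The δ-subdifferential of `h : X × X* → ℝ ∪ {+∞}` with respect to the pairing
`⟨(x,x*),(y*,y)⟩ = ⟨x,y*⟩ + ⟨y,x*⟩`. -/
def epsSubdiff2 (h : X × StrongDual ℝ X → EReal) (δ : ℝ) (z : X × StrongDual ℝ X) :
    Set (StrongDual ℝ X × X) :=
  {w | h z ≠ ⊤ ∧ ∀ u : X × StrongDual ℝ X,
    h z + ((w.1 (u.1 - z.1) + (u.2 - z.2) w.2 : ℝ) : EReal) ≤ h u + (δ : EReal)}

/-- The Fenchel–Young function `f^{FY}(x,x*) = f(x) + f*(x*)`. -/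
def FYfn (f : X → EReal) (z : X × StrongDual ℝ X) : EReal := f z.1 + fconj f z.2

/-- for `h ∈ H(T)` with `T` maximally monotone, the Fitzpatrick
operator `T_h(x) := {x* : (x*,x) ∈ ∂h(x,x*)}` coincides with `T`. -/

private lemma seg_le {c d r : ℝ} (H : ∀ t : ℝ, 0 < t → t < 1 → (1-t)*c + t*d ≤ r) :
    c ≤ r := by
  apply le_of_forall_pos_le_add
  intro ε hε
  set t : ℝ := min (1/2) (ε/(|c-d|+1)) with ht
  have habs : 0 < |c-d|+1 := by positivity
  have ht0 : 0 < t := lt_min (by norm_num) (by positivity)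
  have ht1 : t < 1 := lt_of_le_of_lt (min_le_left _ _) (by norm_num)
  have h1 := H t ht0 ht1
  have h2 : t * (c - d) ≤ t * |c - d| := by
    apply mul_le_mul_of_nonneg_left (le_abs_self _) (le_of_lt ht0)
  have h3 : t * |c - d| ≤ ε := by
    have : t ≤ ε/(|c-d|+1) := min_le_right _ _
    have h4 : t * |c-d| ≤ (ε/(|c-d|+1)) * (|c-d|+1) := by
      apply mul_le_mul this (by linarith [abs_nonneg (c-d)]) (abs_nonneg _)
      positivity
    rwa [div_mul_cancel₀] at h4
    linarith
  nlinarith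

private lemma lemA {X : Type*} [NormedAddCommGroup X] [NormedSpace ℝ X]
    (T : X → Set (StrongDual ℝ X)) (h : X × StrongDual ℝ X → EReal) (hF : InFitzFamily T h)
    {x : X} {p : StrongDual ℝ X} (hp : p ∈ T x) : (p, x) ∈ epsSubdiff2 h 0 (x, p) := by
  obtain ⟨hlsc, hconv, hge, heq⟩ := hF
  have hxp : h (x, p) = ((p x : ℝ) : EReal) := heq x p hp
  refine ⟨by rw [hxp]; exact EReal.coe_ne_top _, ?_⟩
  intro u
  by_cases hu : h u = ⊤
  · rw [hu]; simp
  have hub : h u ≠ ⊥ := by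
    intro hb
    have := hge u
    rw [hb] at this
    exact absurd this (by simp)
  set r : ℝ := (h u).toReal with hr
  have hur : h u = (r : EReal) := (EReal.coe_toReal hu hub).symm
  set c : ℝ := p u.1 + u.2 x - p x with hc
  have key : c ≤ r := by
    apply seg_le (d := u.2 u.1)
    intro t ht0 ht1
    have hcv := hconv (x, p) u (1-t) t (by linarith) (le_of_lt ht0) (by ring)
    have hlow := hge ((1-t) • (x, p) + t • u)
    have hchain := le_trans hlow hcv
    rw [hxp, hur, ← EReal.coe_mul, ← EReal.coe_mul, ← EReal.coe_add,
      EReal.coe_le_coe_iff] at hchain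
    have hpair : pairing ((1-t) • (x, p) + t • u)
        = (1-t)*((1-t)*(p x)) + (1-t)*(t*(p u.1)) + (t*((1-t)*(u.2 x)) + t*(t*(u.2 u.1))) := by
      simp [pairing, Prod.smul_def, map_add, map_smul, smul_eq_mul, mul_add]
      ring
    rw [hpair] at hchain
    have h2 : t * ((1-t)*c + t*(u.2 u.1)) ≤ t * r := by
      have hid : t * ((1-t)*c + t*(u.2 u.1)) =
          ((1-t)*((1-t)*(p x)) + (1-t)*(t*(p u.1))
            + (t*((1-t)*(u.2 x)) + t*(t*(u.2 u.1)))) - (1-t)*(p x) := by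
        rw [hc]; ring
      linarith
    exact le_of_mul_le_mul_left h2 ht0
  rw [hxp, hur]
  rw [show ((0:ℝ) : EReal) = ((0:ℝ) : EReal) from rfl, ← EReal.coe_add, ← EReal.coe_add,
    EReal.coe_le_coe_iff]
  simp only [map_sub, ContinuousLinearMap.sub_apply]
  simp only [hc] at key
  linarith

theorem statement7 (T : X → Set (StrongDual ℝ X)) (hT : IsMaxMonotoneOp T)
    (h : X × StrongDual ℝ X → EReal) (hF : InFitzFamily T h) :
    ∀ x : X, {p : StrongDual ℝ X | (p, x) ∈ epsSubdiff2 h 0 (x, p)} = T x := by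
  intro x
  have hge := hF.2.2.1
  -- monotonicity-type lemma for the Fitzpatrick operator
  have mono : ∀ ⦃y : X⦄ ⦃q : StrongDual ℝ X⦄, (p : StrongDual ℝ X) → (p, x) ∈ epsSubdiff2 h 0 (x, p) →
      (q, y) ∈ epsSubdiff2 h 0 (y, q) → 0 ≤ (p - q) (x - y) := by
    intro y q p hpm hqm
    obtain ⟨hpt, hpi⟩ := hpm
    obtain ⟨hqt, hqi⟩ := hqm
    have hpb : h (x, p) ≠ ⊥ := by
      intro hb; have := hge (x, p); rw [hb] at this; exact absurd this (by simp)
    have hqb : h (y, q) ≠ ⊥ := by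
      intro hb; have := hge (y, q); rw [hb] at this; exact absurd this (by simp)
    set a : ℝ := (h (x, p)).toReal with ha
    set b : ℝ := (h (y, q)).toReal with hb
    have hA : h (x, p) = (a : EReal) := (EReal.coe_toReal hpt hpb).symm
    have hB : h (y, q) = (b : EReal) := (EReal.coe_toReal hqt hqb).symm
    have h1 := hpi (y, q)
    have h2 := hqi (x, p)
    rw [hA, hB] at h1 h2
    rw [← EReal.coe_add, ← EReal.coe_add, EReal.coe_le_coe_iff] at h1 h2
    simp only [map_sub, ContinuousLinearMap.sub_apply] at h1 h2 ⊢
    linarith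
  ext p
  simp only [Set.mem_setOf_eq]
  constructor
  · intro hpm
    apply hT.2 x p
    intro y q hq
    exact mono p hpm (lemA T h hF hq)
  · intro hp
    exact lemA T h hF hp
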